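/- Let n and ℓ be positive integers such that ℓ divides n − ⌈log₄ n⌉ − 3, let k = (n − ⌈log₄ n⌉ − 3)/ℓ, let ε = 4(⌈log₄ n⌉ + ℓ + 3), and let T be an integer with ε < T ≤ 4n such that ℓ divides T − ε. Set m = ⌊log₂ A(k, (T−ε)/ℓ)⌋ and assume m ≥ 1 and n is sufficiently large. Then there exists an (n,T,B)-synthesis code C ⊆ Σ^n with |C| ≥ 2^{ℓm}; equivalently, there is an injective encoder from {0,1}^{ℓm} into an (n,T,B)-synthesis code, with redundancy 2n − ℓ⌊log₂ A(k,(T−ε)/ℓ)⌋ bits. -/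

import Mathlib

/-- A list of integers is quaternary if all entries lie in {1,2,3,4}. -/
def IsQ (x : List ℤ) : Prop := ∀ a ∈ x, 1 ≤ a ∧ a ≤ 4

/-- The alternating quaternary supersequence 1,2,3,4,1,2,3,4,... of length `T`. -/
def altSeq (T : ℕ) : List ℤ := (List.range T).map (fun i => ((i % 4 : ℕ) : ℤ) + 1)

/-- The synthesis time of `x`: the least `T` such that `x` is a subsequence of `altSeq T`. -/
noncomputable def synTime (x : List ℤ) : ℕ := sInf {T : ℕ | x.Sublist (altSeq T)}

/-- The shifted modulo: the unique element of {1,2,3,4} congruent to `a` mod 4. -/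
def mods4 (a : ℤ) : ℤ := (a - 1) % 4 + 1

/-- The differential word of `x`. -/
def diffWord (x : List ℤ) : List ℤ := List.zipWith (fun p c => mods4 (c - p)) (0 :: x) x

/-- The set of quaternary words of length `n` with synthesis time at most `T`. -/
def W (n : ℕ) (T : ℤ) : Set (List ℤ) :=
  {x | x.length = n ∧ IsQ x ∧ (synTime x : ℤ) ≤ T}

/-- `A n T` is the number of quaternary words of length `n` with synthesis time at most `T`. -/
noncomputable def A (n : ℕ) (T : ℤ) : ℕ := (W n T).ncard

/-- The single-indel ball of `x`. -/
def ball (x : List ℤ) : Set (List ℤ) :=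
  {y | y = x ∨ (y.length + 1 = x.length ∧ y.Sublist x) ∨
       (x.length + 1 = y.length ∧ IsQ y ∧ x.Sublist y)}

/-- The auxiliary binary sequence of `x` (as 0/1 naturals). -/
def auxSeq (x : List ℤ) : List ℕ :=
  List.zipWith (fun a b => if a ≤ b then 1 else 0) x x.tail

/-- VT syndrome of a binary word: `∑ i·w_i` with positions starting from 1. -/
def vtSyn (w : List ℕ) : ℕ := ∑ i ∈ Finset.range w.length, (i + 1) * w.getD i 0

/-- The quaternary VT code. -/
def VTn (n : ℕ) (a : ZMod n) (b : ZMod 4) : Set (List ℤ) :=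
  {x | x.length = n ∧ IsQ x ∧ ((vtSyn (auxSeq x) : ℕ) : ZMod n) = a ∧
       ((x.sum : ℤ) : ZMod 4) = b}

/-- The quaternary VT code with synthesis time constraint. -/
def VTnT (n : ℕ) (a : ZMod n) (b : ZMod 4) (T : ℤ) : Set (List ℤ) :=
  {x ∈ VTn n a b | (synTime x : ℤ) ≤ T}



/-- The alternating sequence starting at phase `φ`. -/
def altFrom (φ T : ℕ) : List ℤ := (List.range T).map (fun i => (((φ + i) % 4 : ℕ) : ℤ) + 1)

lemma altSeq_eq (T : ℕ) : altSeq T = altFrom 0 T := by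
  simp [altSeq, altFrom]

lemma altFrom_add (φ a b : ℕ) : altFrom φ (a + b) = altFrom φ a ++ altFrom (φ + a) b := by
  simp only [altFrom, List.range_add, List.map_append, List.map_map]
  congr 1
  apply List.map_congr_left
  intro i _
  simp only [Function.comp_apply]
  congr 2
  omega

lemma altFrom_congr {φ ψ : ℕ} (h : φ % 4 = ψ % 4) (T : ℕ) : altFrom φ T = altFrom ψ T := by
  simp only [altFrom]
  apply List.map_congr_left
  intro i _
  congr 2
  omega

lemma sublist_altSeq_append {p q : List ℤ} {a b : ℕ} (h1 : p.Sublist (altSeq a))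
    (h2 : q.Sublist (altSeq b)) : (p ++ q).Sublist (altSeq (a + 3 + b)) := by
  set r := (4 - a % 4) % 4 with hr
  have hr3 : r ≤ 3 := by omega
  have key : altSeq (a + 3 + b) = altSeq a ++ (altFrom a r ++ altSeq (b + (3 - r))) := by
    have e1 : a + 3 + b = a + (r + (b + (3 - r))) := by omega
    rw [altSeq_eq, e1, altFrom_add, altFrom_add, Nat.zero_add, ← altSeq_eq]
    congr 2
    rw [altSeq_eq]
    apply altFrom_congr
    omega
  rw [key]
  refine List.Sublist.append h1 ?_
  refine List.Sublist.trans ?_ (List.sublist_append_right _ _)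
  have hpre : (altSeq b).IsPrefix (altSeq (b + (3 - r))) := by
    rw [altSeq_eq (b + (3 - r)), altFrom_add, ← altSeq_eq]
    exact ⟨_, rfl⟩
  exact h2.trans hpre.sublist

lemma altSeq_four : altSeq 4 = [1, 2, 3, 4] := by
  simp [altSeq, List.range_succ]

lemma altSeq_prefix {a b : ℕ} (h : a ≤ b) : (altSeq a).IsPrefix (altSeq b) := by
  rw [altSeq_eq b, show b = a + (b - a) by omega, altFrom_add, ← altSeq_eq]
  exact ⟨_, rfl⟩

lemma isQ_sublist_alt {x : List ℤ} (h : IsQ x) : x.Sublist (altSeq (4 * x.length)) := by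
  induction x with
  | nil => exact List.nil_sublist _
  | cons a x ih =>
    have key : altSeq (4 * (a :: x).length) = altSeq 4 ++ altSeq (4 * x.length) := by
      rw [altSeq_eq, show 4 * (a :: x).length = 4 + 4 * x.length by
        simp [List.length_cons]; ring, altFrom_add, ← altSeq_eq]
      congr 1
      rw [altSeq_eq]
      apply altFrom_congr; omega
    rw [key]
    have ha := h a (by simp)
    have hax : [a].Sublist (altSeq 4) := by
      rw [altSeq_four, List.singleton_sublist]
      have h1 := ha.1; have h2 := ha.2
      interval_cases a <;> simp
    have : (a :: x) = [a] ++ x := rfl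
    rw [this]
    exact List.Sublist.append hax (ih (fun b hb => h b (by simp [hb])))

lemma synTime_le {x : List ℤ} {T : ℕ} (h : x.Sublist (altSeq T)) : synTime x ≤ T :=
  Nat.sInf_le h

lemma sublist_of_isQ_synTime_le {x : List ℤ} {T : ℕ} (hq : IsQ x) (h : synTime x ≤ T) :
    x.Sublist (altSeq T) := by
  have hne : {T : ℕ | x.Sublist (altSeq T)}.Nonempty := ⟨4 * x.length, isQ_sublist_alt hq⟩
  have hm : x.Sublist (altSeq (synTime x)) := Nat.sInf_mem hne
  exact hm.trans (altSeq_prefix h).sublist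

lemma aux_nil : auxSeq [] = [] := rfl
lemma aux_singleton (a : ℤ) : auxSeq [a] = [] := rfl
lemma aux_cons_cons (a b : ℤ) (l : List ℤ) :
    auxSeq (a :: b :: l) = (if a ≤ b then 1 else 0) :: auxSeq (b :: l) := rfl

lemma aux_length (x : List ℤ) : (auxSeq x).length = x.length - 1 := by
  simp [auxSeq]

lemma aux_binary : ∀ (x : List ℤ), ∀ c ∈ auxSeq x, c = 0 ∨ c = 1 := by
  intro x
  induction x with
  | nil => simp [aux_nil]
  | cons a x ih =>
    cases x with
    | nil => simp [aux_singleton]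
    | cons b l =>
      rw [aux_cons_cons]
      intro c hc
      rcases List.mem_cons.mp hc with h | h
      · subst h; split <;> simp
      · exact ih c h

lemma aux_split : ∀ (s : List ℤ) (a : ℤ) (t : List ℤ),
    auxSeq (s ++ a :: t) = auxSeq (s ++ [a]) ++ auxSeq (a :: t) := by
  intro s
  induction s with
  | nil => intro a t; simp [aux_singleton]
  | cons c s' ih =>
    intro a t
    cases s' with
    | nil => simp [aux_cons_cons, aux_singleton]
    | cons d s'' =>
      have h1 : (c :: d :: s'') ++ a :: t = c :: d :: (s'' ++ a :: t) := rfl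
      have h2 : (c :: d :: s'') ++ [a] = c :: d :: (s'' ++ [a]) := rfl
      rw [h1, h2, aux_cons_cons, aux_cons_cons]
      have h3 : d :: (s'' ++ a :: t) = (d :: s'') ++ a :: t := rfl
      have h4 : d :: (s'' ++ [a]) = (d :: s'') ++ [a] := rfl
      rw [h3, h4, ih a t]
      simp

/-- chain lemma -/
lemma chain_lemma : ∀ (mid : List ℤ) (a b : ℤ) (t : List ℤ),
    auxSeq (a :: (mid ++ t)) = auxSeq (mid ++ b :: t) →
    ((a ≤ b ∧ ∀ w ∈ mid, a ≤ w ∧ w ≤ b) ∨ (b < a ∧ ∀ w ∈ mid, w < a ∧ b < w)) := by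
  intro mid
  induction mid with
  | nil =>
    intro a b t _
    rcases le_or_gt a b with h | h
    · exact Or.inl ⟨h, by simp⟩
    · exact Or.inr ⟨h, by simp⟩
  | cons m mid' ih =>
    intro a b t E
    cases mid' with
    | nil =>
      simp only [List.cons_append, List.nil_append, aux_cons_cons] at E
      have hhead : (if a ≤ m then (1:ℕ) else 0) = (if m ≤ b then 1 else 0) :=
        (List.cons.injEq _ _ _ _).mp E |>.1
      by_cases h1 : a ≤ m <;> by_cases h2 : m ≤ b <;> simp [h1, h2] at hhead
      · exact Or.inl ⟨le_trans h1 h2, by intro w hw; simp at hw; subst hw; exact ⟨h1, h2⟩⟩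
      · refine Or.inr ⟨by omega, by intro w hw; simp at hw; subst hw; omega⟩
    | cons m2 mid'' =>
      have e1 : a :: ((m :: m2 :: mid'') ++ t) = a :: m :: ((m2 :: mid'') ++ t) := rfl
      have e2 : (m :: m2 :: mid'') ++ b :: t = m :: m2 :: (mid'' ++ b :: t) := rfl
      rw [e1, e2, aux_cons_cons, aux_cons_cons] at E
      have hhead : (if a ≤ m then (1:ℕ) else 0) = (if m ≤ m2 then 1 else 0) :=
        (List.cons.injEq _ _ _ _).mp E |>.1
      have htail : auxSeq (m :: ((m2 :: mid'') ++ t)) = auxSeq ((m2 :: mid'') ++ b :: t) := by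
        have := (List.cons.injEq _ _ _ _).mp E |>.2
        convert this using 2 <;> simp
      have IH := ih m b t htail
      rcases IH with ⟨hmb, hall⟩ | ⟨hbm, hall⟩
      · have hmm2 : m ≤ m2 := (hall m2 (by simp)).1
        have ham : a ≤ m := by
          by_cases h1 : a ≤ m
          · exact h1
          · simp [h1, hmm2] at hhead
        refine Or.inl ⟨le_trans ham hmb, ?_⟩
        intro w hw
        rcases List.mem_cons.mp hw with h | h
        · subst h; exact ⟨ham, hmb⟩
        · exact ⟨le_trans ham (hall w h).1, (hall w h).2⟩
      · have hmm2 : m2 < m := (hall m2 (by simp)).1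
        have hma : m < a := by
          by_cases h1 : a ≤ m
          · simp [h1, not_le.mpr hmm2] at hhead
          · omega
        refine Or.inr ⟨by omega, ?_⟩
        intro w hw
        rcases List.mem_cons.mp hw with h | h
        · subst h; exact ⟨hma, hbm⟩
        · exact ⟨lt_trans (hall w h).1 hma, (hall w h).2⟩

lemma sum_getD (w : List ℕ) : ∑ i ∈ Finset.range w.length, w.getD i 0 = w.sum := by
  induction w with
  | nil => simp
  | cons c w ih =>
    rw [List.length_cons, Finset.sum_range_succ']
    simp only [List.getD_cons_succ, List.getD_cons_zero, List.sum_cons]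
    rw [ih]; ring

lemma vtSyn_cons (c : ℕ) (w : List ℕ) : vtSyn (c :: w) = c + w.sum + vtSyn w := by
  unfold vtSyn
  rw [List.length_cons, Finset.sum_range_succ']
  simp only [List.getD_cons_succ, List.getD_cons_zero]
  have : ∑ i ∈ Finset.range w.length, (i + 1 + 1) * w.getD i 0
      = (∑ i ∈ Finset.range w.length, (i + 1) * w.getD i 0)
        + ∑ i ∈ Finset.range w.length, w.getD i 0 := by
    rw [← Finset.sum_add_distrib]
    apply Finset.sum_congr rfl
    intro i _; ring
  rw [this, sum_getD]; ring

lemma vtSyn_append (p q : List ℕ) : vtSyn (p ++ q) = vtSyn p + p.length * q.sum + vtSyn q := by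
  induction p with
  | nil => simp [vtSyn]
  | cons c p ih =>
    rw [List.cons_append, vtSyn_cons, vtSyn_cons, ih, List.sum_append, List.length_cons]
    ring

lemma binary_sum_le {w : List ℕ} (h : ∀ c ∈ w, c = 0 ∨ c = 1) : w.sum ≤ w.length := by
  induction w with
  | nil => simp
  | cons c w ih =>
    have hc := h c List.mem_cons_self
    have := ih (fun d hd => h d (List.mem_cons_of_mem c hd))
    simp only [List.sum_cons, List.length_cons]
    omega

lemma binary_all_one {w : List ℕ} (h : ∀ c ∈ w, c = 0 ∨ c = 1) (hs : w.sum = w.length) :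
    ∀ c ∈ w, c = 1 := by
  induction w with
  | nil => simp
  | cons c w ih =>
    have hc := h c List.mem_cons_self
    have hle := binary_sum_le (fun d hd => h d (List.mem_cons_of_mem c hd))
    simp only [List.sum_cons, List.length_cons] at hs
    have hc1 : c = 1 := by omega
    have hsum : w.sum = w.length := by omega
    intro d hd
    rcases List.mem_cons.mp hd with h' | h'
    · omega
    · exact ih (fun e he => h e (List.mem_cons_of_mem c he)) hsum d h'

/-- Helper for the binary VT theorem, assuming `P1` is a prefix of `P2`. -/
lemma vt_binary_aux (P1 mid Q2 : List ℕ) (b1 b2 : ℕ)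
    (hb1 : b1 = 0 ∨ b1 = 1) (hb2 : b2 = 0 ∨ b2 = 1)
    (hbin : ∀ c ∈ mid, c = 0 ∨ c = 1)
    (hmod : vtSyn (P1 ++ b1 :: (mid ++ Q2)) ≡ vtSyn ((P1 ++ mid) ++ b2 :: Q2)
      [MOD (P1 ++ (mid ++ Q2)).length + 2]) :
    P1 ++ b1 :: (mid ++ Q2) = (P1 ++ mid) ++ b2 :: Q2 := by
  set p := P1.length with hp
  set r := mid.length with hrr
  set σ := mid.sum with hσ
  have hσr : σ ≤ r := binary_sum_le hbin
  set N : ℕ := (P1 ++ (mid ++ Q2)).length + 2 with hN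
  have hNval : N = p + r + Q2.length + 2 := by
    simp only [hN, List.length_append]
    omega
  have hS1 : vtSyn (P1 ++ b1 :: (mid ++ Q2))
      = vtSyn P1 + p * (b1 + (σ + Q2.sum)) + (b1 + (σ + Q2.sum)
        + (vtSyn mid + r * Q2.sum + vtSyn Q2)) := by
    rw [vtSyn_append, vtSyn_cons, vtSyn_append]
    simp [List.sum_cons, List.sum_append]; rfl
  have hS2 : vtSyn ((P1 ++ mid) ++ b2 :: Q2)
      = (vtSyn P1 + p * σ + vtSyn mid) + (p + r) * (b2 + Q2.sum)
        + (b2 + Q2.sum + vtSyn Q2) := by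
    rw [vtSyn_append, vtSyn_cons, vtSyn_append]
    simp [List.sum_cons, List.length_append]; rfl
  have hdvd : (N : ℤ) ∣ ((vtSyn ((P1 ++ mid) ++ b2 :: Q2) : ℤ)
      - (vtSyn (P1 ++ b1 :: (mid ++ Q2)) : ℤ)) := Nat.modEq_iff_dvd.mp hmod
  have key : (vtSyn ((P1 ++ mid) ++ b2 :: Q2) : ℤ) - (vtSyn (P1 ++ b1 :: (mid ++ Q2)) : ℤ)
      = ((p:ℤ) + r + 1) * b2 - ((p:ℤ) + 1) * b1 - σ := by
    rw [hS1, hS2]; push_cast; ring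
  rw [key] at hdvd
  obtain ⟨kk, hkk⟩ := hdvd
  have hb1' : (b1:ℤ) = 0 ∨ (b1:ℤ) = 1 := by rcases hb1 with h|h <;> simp [h]
  have hb2' : (b2:ℤ) = 0 ∨ (b2:ℤ) = 1 := by rcases hb2 with h|h <;> simp [h]
  have hσ' : (σ:ℤ) ≤ r := by exact_mod_cast hσr
  have hσ0 : (0:ℤ) ≤ σ := by positivity
  have hNZ : ((p:ℤ) + r + Q2.length + 2) = (N:ℤ) := by rw [hNval]; push_cast; ring
  have hzero : ((p:ℤ) + r + 1) * b2 - ((p:ℤ) + 1) * b1 - σ = 0 := by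
    rcases lt_trichotomy kk 0 with h | h | h
    · have h1 : kk ≤ -1 := by omega
      have h2 : (N:ℤ) * kk ≤ (N:ℤ) * (-1) := by
        apply mul_le_mul_of_nonneg_left h1 (by positivity)
      rw [hkk]
      exfalso
      have hq0 : (0:ℤ) ≤ (Q2.length : ℤ) := by positivity
      rcases hb1' with e1|e1 <;> rcases hb2' with e2|e2 <;> rw [e1, e2] at hkk <;> omega
    · rw [hkk, h, mul_zero]
    · have h1 : 1 ≤ kk := by omega
      have h2 : (N:ℤ) * 1 ≤ (N:ℤ) * kk := by
        apply mul_le_mul_of_nonneg_left h1 (by positivity)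
      rw [hkk]
      exfalso
      have hq0 : (0:ℤ) ≤ (Q2.length : ℤ) := by positivity
      rcases hb1' with e1|e1 <;> rcases hb2' with e2|e2 <;> rw [e1, e2] at hkk <;> omega
  -- now case on the bits
  have goal_of_mid : b1 :: mid = mid ++ [b2] → P1 ++ b1 :: (mid ++ Q2) = (P1 ++ mid) ++ b2 :: Q2 := by
    intro hm
    have : b1 :: (mid ++ Q2) = (b1 :: mid) ++ Q2 := rfl
    rw [this, hm]
    simp
  rcases hb1 with e1|e1 <;> rcases hb2 with e2|e2 <;> subst e1 <;> subst e2 <;>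
    simp only [Nat.cast_zero, Nat.cast_one, mul_zero, mul_one] at hzero
  · -- b1 = 0, b2 = 0 : σ = 0
    have hσz : σ = 0 := by omega
    have hm : ∀ c ∈ mid, c = 0 := by
      intro c hc
      rcases hbin c hc with h|h
      · exact h
      · exfalso
        have := List.single_le_sum (fun (x:ℕ) (_ : x ∈ mid) => Nat.zero_le x) c hc
        omega
    apply goal_of_mid
    have := List.eq_replicate_of_mem hm
    rw [this, ← List.replicate_succ, List.replicate_succ']
  · -- b1 = 0, b2 = 1 : p + r + 1 = σ, contradiction
    exfalso; omega
  · -- b1 = 1, b2 = 0 : 0 = p + 1 + σ contradiction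
    exfalso; omega
  · -- b1 = 1, b2 = 1 : σ = r
    have hσz : σ = r := by omega
    have hm : ∀ c ∈ mid, c = 1 := binary_all_one hbin (by omega)
    apply goal_of_mid
    have := List.eq_replicate_of_mem hm
    rw [this, ← List.replicate_succ, List.replicate_succ']

/-- The binary VT theorem. -/
lemma vt_binary (P1 Q1 P2 Q2 : List ℕ) (b1 b2 : ℕ)
    (hb1 : b1 = 0 ∨ b1 = 1) (hb2 : b2 = 0 ∨ b2 = 1)
    (hbin : ∀ c ∈ P1 ++ Q1, c = 0 ∨ c = 1)
    (hd : P1 ++ Q1 = P2 ++ Q2)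
    (hmod : vtSyn (P1 ++ b1 :: Q1) ≡ vtSyn (P2 ++ b2 :: Q2) [MOD (P1 ++ Q1).length + 2]) :
    P1 ++ b1 :: Q1 = P2 ++ b2 :: Q2 := by
  rcases le_total P1.length P2.length with hle | hle
  · have hpre1 : P1 <+: P1 ++ Q1 := List.prefix_append _ _
    have hpre2 : P2 <+: P1 ++ Q1 := hd ▸ List.prefix_append _ _
    obtain ⟨mid, rfl⟩ := List.prefix_of_prefix_length_le hpre1 hpre2 hle
    have hQ1 : Q1 = mid ++ Q2 := by
      have : P1 ++ Q1 = P1 ++ (mid ++ Q2) := by rw [hd]; simp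
      exact List.append_cancel_left this
    subst hQ1
    exact vt_binary_aux P1 mid Q2 b1 b2 hb1 hb2
      (fun c hc => hbin c (by simp [hc])) hmod
  · have hpre1 : P1 <+: P1 ++ Q1 := List.prefix_append _ _
    have hpre2 : P2 <+: P1 ++ Q1 := hd ▸ List.prefix_append _ _
    obtain ⟨mid, rfl⟩ := List.prefix_of_prefix_length_le hpre2 hpre1 hle
    have hQ2 : Q2 = mid ++ Q1 := by
      have h' : P2 ++ Q2 = P2 ++ (mid ++ Q1) := by rw [← hd]; simp
      exact List.append_cancel_left h'
    subst hQ2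
    refine (vt_binary_aux P2 mid Q1 b2 b1 hb2 hb1
      (fun c hc => hbin c (by simp [hc])) ?_).symm
    have hmm : ((P2 ++ mid) ++ Q1).length = (P2 ++ (mid ++ Q1)).length := by simp
    have h2 := hmod.symm
    rw [hmm] at h2
    exact h2

/-- deleting one symbol decomposition -/
lemma sublist_pred_decomp : ∀ (x z : List ℤ), z.Sublist x → z.length + 1 = x.length →
    ∃ s v t, x = s ++ v :: t ∧ z = s ++ t := by
  intro x
  induction x with
  | nil => intro z h hl; simp at hl
  | cons a x' ih =>
    intro z h hl
    cases h with
    | cons _ h' =>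
      have : z = x' := h'.eq_of_length (by simp at hl; omega)
      exact ⟨[], a, x', by simp, by simp [this]⟩
    | cons_cons _ h' =>
      rename_i z'
      obtain ⟨s, v, t, hx, hz⟩ := ih z' h' (by simp at hl ⊢; omega)
      exact ⟨a :: s, v, t, by simp [hx], by simp [hz]⟩

/-- two distinct equal-length words with a common supersequence (one longer) have a
common subsequence (one shorter) -/
lemma common_sub_of_common_super : ∀ (w x y : List ℤ), x.Sublist w → y.Sublist w →
    x.length = y.length → w.length = x.length + 1 → x ≠ y →
    ∃ u : List ℤ, u.Sublist x ∧ u.Sublist y ∧ u.length + 1 = x.length := by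
  intro w
  induction w with
  | nil => intro x y hx hy hl hw hne; simp at hw
  | cons c w' ih =>
    intro x y hx hy hl hw hne
    cases hx with
    | cons _ hx' =>
      have hxw : x = w' := hx'.eq_of_length (by simp at hw; omega)
      cases hy with
      | cons _ hy' =>
        have hyw : y = w' := hy'.eq_of_length (by simp at hw hl; omega)
        exact absurd (hxw.trans hyw.symm) hne
      | cons_cons _ hy' =>
        rename_i y'
        refine ⟨y', ?_, ?_, ?_⟩
        · rw [hxw]; exact hy'
        · exact List.sublist_cons_self c y' |>.trans (List.Sublist.refl _)
        · simp at hl ⊢; omega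
    | cons_cons _ hx' =>
      rename_i x'
      cases hy with
      | cons _ hy' =>
        have hyw : y = w' := hy'.eq_of_length (by simp at hw hl; omega)
        refine ⟨x', ?_, ?_, ?_⟩
        · exact List.sublist_cons_self c x' |>.trans (List.Sublist.refl _)
        · rw [hyw]; exact hx'
        · simp
      | cons_cons _ hy' =>
        rename_i y'
        have hne' : x' ≠ y' := fun h => hne (by rw [h])
        obtain ⟨u, h1, h2, h3⟩ := ih x' y' hx' hy' (by simp at hl; omega)
          (by simp at hw ⊢; omega) hne'
        exact ⟨c :: u, h1.cons_cons c, h2.cons_cons c, by simp at h3 ⊢; omega⟩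

/-- appending one element to a nonempty list appends one bit to its aux sequence -/
lemma aux_snoc : ∀ (s : List ℤ), s ≠ [] → ∀ u : ℤ, ∃ b, (b = 0 ∨ b = 1) ∧
    auxSeq (s ++ [u]) = auxSeq s ++ [b] := by
  intro s
  induction s with
  | nil => intro h; exact absurd rfl h
  | cons c s' ih =>
    intro _ u
    cases s' with
    | nil =>
      refine ⟨if c ≤ u then 1 else 0, by split <;> simp, ?_⟩
      simp [aux_cons_cons, aux_singleton]
    | cons d s'' =>
      obtain ⟨b, hb, he⟩ := ih (by simp) u
      refine ⟨b, hb, ?_⟩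
      have e1 : (c :: d :: s'') ++ [u] = c :: ((d :: s'') ++ [u]) := rfl
      rw [e1]
      have e2 : (d :: s'') ++ [u] = d :: (s'' ++ [u]) := rfl
      rw [e2, aux_cons_cons]
      have e3 : d :: (s'' ++ [u]) = (d :: s'') ++ [u] := rfl
      rw [e3, he, aux_cons_cons]
      simp

/-- the merged-bit lemma: inserting a symbol into a nonempty word inserts one bit
into its aux sequence -/
lemma aux_insert_decomp : ∀ (s t : List ℤ) (u : ℤ), s ++ t ≠ [] →
    ∃ P b Q, (b = 0 ∨ b = 1) ∧ auxSeq (s ++ u :: t) = P ++ b :: Q ∧ auxSeq (s ++ t) = P ++ Q := by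
  intro s t u hne
  cases t with
  | nil =>
    have hs : s ≠ [] := by simpa using hne
    obtain ⟨b, hb, he⟩ := aux_snoc s hs u
    exact ⟨auxSeq s, b, [], hb, by simpa using he, by simp⟩
  | cons t0 t' =>
    clear hne
    induction s with
    | nil =>
      exact ⟨[], if u ≤ t0 then 1 else 0, auxSeq (t0 :: t'), by split <;> simp,
        by simp [aux_cons_cons], by simp⟩
    | cons c s' ih =>
      cases s' with
      | nil =>
        -- x = c :: u :: t0 :: t'  vs  z = c :: t0 :: t'
        have hclaim : (if c ≤ t0 then (1:ℕ) else 0) = (if c ≤ u then 1 else 0) ∨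
            (if c ≤ t0 then (1:ℕ) else 0) = (if u ≤ t0 then 1 else 0) := by
          by_cases h1 : c ≤ u <;> by_cases h2 : u ≤ t0 <;> by_cases h3 : c ≤ t0 <;>
            simp [h1, h2, h3] <;> omega
        rcases hclaim with hc | hc
        · refine ⟨[if c ≤ u then 1 else 0], if u ≤ t0 then 1 else 0, auxSeq (t0 :: t'),
            by split <;> simp, ?_, ?_⟩
          · simp [aux_cons_cons]
          · simp [aux_cons_cons, hc]
        · refine ⟨[], if c ≤ u then 1 else 0, (if u ≤ t0 then (1:ℕ) else 0) :: auxSeq (t0 :: t'),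
            by split <;> simp, ?_, ?_⟩
          · simp [aux_cons_cons]
          · simp [aux_cons_cons, hc]
      | cons d s'' =>
        obtain ⟨P, b, Q, hb, h1, h2⟩ := ih
        refine ⟨(if c ≤ d then (1:ℕ) else 0) :: P, b, Q, hb, ?_, ?_⟩
        · have e1 : (c :: d :: s'') ++ u :: t0 :: t' = c :: ((d :: s'') ++ u :: t0 :: t') := rfl
          rw [e1]
          have e2 : (d :: s'') ++ u :: t0 :: t' = d :: (s'' ++ u :: t0 :: t') := rfl
          rw [e2, aux_cons_cons, ← e2, h1]
          simp
        · have e1 : (c :: d :: s'') ++ t0 :: t' = c :: ((d :: s'') ++ t0 :: t') := rfl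
          rw [e1]
          have e2 : (d :: s'') ++ t0 :: t' = d :: (s'' ++ t0 :: t') := rfl
          rw [e2, aux_cons_cons, ← e2, h2]
          simp

lemma tenAux (n : ℕ) (u v : ℤ) (S1 T1 S2 T2 : List ℤ)
    (hle : S1.length ≤ S2.length)
    (hz : S1 ++ T1 = S2 ++ T2)
    (hlx : (S1 ++ u :: T1).length = n)
    (hqx : IsQ (S1 ++ u :: T1)) (hqy : IsQ (S2 ++ v :: T2))
    (hsum : (((S1 ++ u :: T1).sum : ℤ) : ZMod 4) = (((S2 ++ v :: T2).sum : ℤ) : ZMod 4))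
    (hvt : ((vtSyn (auxSeq (S1 ++ u :: T1)) : ℕ) : ZMod n)
      = ((vtSyn (auxSeq (S2 ++ v :: T2)) : ℕ) : ZMod n)) :
    S1 ++ u :: T1 = S2 ++ v :: T2 := by
  -- extract the middle segment
  have hpre1 : S1 <+: S1 ++ T1 := List.prefix_append _ _
  have hpre2 : S2 <+: S1 ++ T1 := hz ▸ List.prefix_append _ _
  obtain ⟨mid, rfl⟩ := List.prefix_of_prefix_length_le hpre1 hpre2 hle
  have hT1 : T1 = mid ++ T2 := by
    have h' : S1 ++ T1 = S1 ++ (mid ++ T2) := by rw [hz]; simp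
    exact List.append_cancel_left h'
  subst hT1
  -- u = v
  have hu := hqx u (by simp)
  have hv := hqy v (by simp)
  have huv : u = v := by
    have h4 := (ZMod.intCast_eq_intCast_iff _ _ _).mp hsum
    have hsub : (S1 ++ u :: (mid ++ T2)).sum - ((S1 ++ mid) ++ v :: T2).sum = u - v := by
      simp [List.sum_append, List.sum_cons]; ring
    have hdvd : (4:ℤ) ∣ (u - v) := by
      rw [← hsub]
      exact_mod_cast h4.symm.dvd
    omega
  subst huv
  by_cases hall : ∀ w ∈ mid, w = u
  · have hrep := List.eq_replicate_of_mem hall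
    rw [hrep]
    have key : u :: (List.replicate mid.length u ++ T2)
        = List.replicate mid.length u ++ u :: T2 := by
      rw [← List.cons_append, ← List.replicate_succ, List.replicate_succ']
      simp
    rw [key]
    simp [List.append_assoc]
  · push_neg at hall
    obtain ⟨w, hw, hwu⟩ := hall
    have hmidne : mid ≠ [] := List.ne_nil_of_mem hw
    exfalso
    -- decompose aux sequences around the insertions
    obtain ⟨P1, b1, Q1, hb1, hx1, hz1⟩ := aux_insert_decomp S1 (mid ++ T2) u
      (by simp [hmidne])
    obtain ⟨P2, b2, Q2, hb2, hx2, hz2⟩ := aux_insert_decomp (S1 ++ mid) T2 u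
      (by simp [hmidne])
    have hzz : auxSeq (S1 ++ (mid ++ T2)) = auxSeq ((S1 ++ mid) ++ T2) := by
      rw [List.append_assoc]
    have hdd : P1 ++ Q1 = P2 ++ Q2 := by rw [← hz1, ← hz2, hzz]
    have hbinPQ : ∀ c ∈ P1 ++ Q1, c = 0 ∨ c = 1 := by
      intro c hc; rw [← hz1] at hc; exact aux_binary _ c hc
    -- modulus arithmetic
    have hlenz : (P1 ++ Q1).length + 2 = n := by
      have h1 : (P1 ++ Q1).length = (auxSeq (S1 ++ (mid ++ T2))).length := by rw [hz1]
      rw [aux_length] at h1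
      have h2 : (S1 ++ (mid ++ T2)).length = S1.length + mid.length + T2.length := by
        simp [List.length_append]; omega
      have h3 : (S1 ++ u :: (mid ++ T2)).length = S1.length + mid.length + T2.length + 1 := by
        simp [List.length_append]; omega
      have hm1 : 1 ≤ mid.length := List.length_pos_iff.mpr hmidne
      rw [h1, h2]
      omega
    have hvt' : vtSyn (P1 ++ b1 :: Q1) ≡ vtSyn (P2 ++ b2 :: Q2) [MOD (P1 ++ Q1).length + 2] := by
      rw [hlenz]
      rw [hx1, hx2] at hvt
      exact (ZMod.natCast_eq_natCast_iff _ _ _).mp hvt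
    have haux : auxSeq (S1 ++ u :: (mid ++ T2)) = auxSeq ((S1 ++ mid) ++ u :: T2) := by
      rw [hx1, hx2]
      exact vt_binary P1 Q1 P2 Q2 b1 b2 hb1 hb2 hbinPQ hdd hvt'
    -- now strip the common prefix and apply the chain lemma
    obtain ⟨m, mid'', rfl⟩ : ∃ m mid'', mid = m :: mid'' := by
      cases mid with
      | nil => exact absurd rfl hmidne
      | cons m mid'' => exact ⟨m, mid'', rfl⟩
    have hsplit1 : auxSeq (S1 ++ u :: ((m :: mid'') ++ T2))
        = auxSeq (S1 ++ [u]) ++ auxSeq (u :: ((m :: mid'') ++ T2)) := aux_split _ _ _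
    have hy' : (S1 ++ (m :: mid'')) ++ u :: T2 = S1 ++ m :: (mid'' ++ u :: T2) := by simp
    have hsplit2 : auxSeq ((S1 ++ (m :: mid'')) ++ u :: T2)
        = auxSeq (S1 ++ [m]) ++ auxSeq (m :: (mid'' ++ u :: T2)) := by
      rw [hy']; exact aux_split _ _ _
    rw [hsplit1, hsplit2] at haux
    have hlen12 : (auxSeq (S1 ++ [u])).length = (auxSeq (S1 ++ [m])).length := by
      rw [aux_length, aux_length]
      simp [List.length_append]
    have htails := (List.append_inj haux hlen12).2
    have hchain : auxSeq (u :: ((m :: mid'') ++ T2)) = auxSeq ((m :: mid'') ++ u :: T2) := by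
      rw [htails]; congr 1
    rcases chain_lemma (m :: mid'') u u T2 hchain with ⟨_, h2⟩ | ⟨h1, _⟩
    · have := h2 w hw
      omega
    · omega

lemma tenengolts {n : ℕ} {x y z : List ℤ} (hx : x.length = n) (hy : y.length = n)
    (hqx : IsQ x) (hqy : IsQ y)
    (hsum : ((x.sum : ℤ) : ZMod 4) = ((y.sum : ℤ) : ZMod 4))
    (hvt : ((vtSyn (auxSeq x) : ℕ) : ZMod n) = ((vtSyn (auxSeq y) : ℕ) : ZMod n))
    (hzx : z.Sublist x) (hzy : z.Sublist y) (hzl : z.length + 1 = n) : x = y := by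
  obtain ⟨S1, u, T1, hx1, hz1⟩ := sublist_pred_decomp x z hzx (by omega)
  obtain ⟨S2, v, T2, hy1, hz2⟩ := sublist_pred_decomp y z hzy (by omega)
  subst hx1; subst hy1
  have hz12 : S1 ++ T1 = S2 ++ T2 := hz1.symm.trans hz2
  rcases le_total S1.length S2.length with hle | hle
  · exact tenAux n u v S1 T1 S2 T2 hle hz12 hx hqx hqy hsum hvt
  · exact (tenAux n v u S2 T2 S1 T1 hle hz12.symm hy hqy hqx hsum.symm hvt.symm).symm

lemma disj_balls {n : ℕ} {x y : List ℤ} (hx : x.length = n) (hy : y.length = n)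
    (hqx : IsQ x) (hqy : IsQ y)
    (hsum : ((x.sum : ℤ) : ZMod 4) = ((y.sum : ℤ) : ZMod 4))
    (hvt : ((vtSyn (auxSeq x) : ℕ) : ZMod n) = ((vtSyn (auxSeq y) : ℕ) : ZMod n))
    (hne : x ≠ y) : Disjoint (ball x) (ball y) := by
  rw [Set.disjoint_left]
  rintro w hwx hwy
  rcases hwx with h1 | ⟨h1, h1'⟩ | ⟨h1, _, h1'⟩ <;>
    rcases hwy with h2 | ⟨h2, h2'⟩ | ⟨h2, _, h2'⟩
  · exact hne (h1.symm.trans h2)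
  · subst h1; omega
  · subst h1; omega
  · subst h2; omega
  · -- common deletion
    exact hne (tenengolts hx hy hqx hqy hsum hvt h1' h2' (by omega))
  · omega
  · subst h2; omega
  · omega
  · -- common insertion
    obtain ⟨zz, hz1, hz2, hz3⟩ := common_sub_of_common_super w x y h1' h2'
      (by omega) (by omega) hne
    exact hne (tenengolts hx hy hqx hqy hsum hvt hz1 hz2 (by omega))

lemma finite_len_isQ : ∀ n : ℕ, {l : List ℤ | l.length = n ∧ IsQ l}.Finite := by
  intro n
  induction n with
  | zero =>
    apply Set.Finite.subset (Set.finite_singleton ([] : List ℤ))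
    rintro l ⟨hl, _⟩
    simp [List.length_eq_zero_iff] at hl
    simp [hl]
  | succ n ih =>
    apply Set.Finite.subset (Set.Finite.image2 (fun (a : ℤ) (l : List ℤ) => a :: l)
      (Set.finite_Icc (1:ℤ) 4) ih)
    rintro l ⟨hl, hq⟩
    cases l with
    | nil => simp at hl
    | cons a l' =>
      refine Set.mem_image2_of_mem ?_ ?_
      · exact Set.mem_Icc.mpr ⟨(hq a (by simp)).1, (hq a (by simp)).2⟩
      · exact ⟨by simp at hl; omega, fun b hb => hq b (List.mem_cons_of_mem a hb)⟩

lemma finW (n : ℕ) (T : ℤ) : (W n T).Finite :=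
  (finite_len_isQ n).subset (by rintro x ⟨h1, h2, _⟩; exact ⟨h1, h2⟩)

lemma flatten_syn (s : ℕ) : ∀ L : List (List ℤ), L ≠ [] →
    (∀ B ∈ L, B.Sublist (altSeq s)) →
    L.flatten.Sublist (altSeq (s + (L.length - 1) * (s + 3))) := by
  intro L
  induction L with
  | nil => intro h; exact absurd rfl h
  | cons B L' ih =>
    intro _ hall
    cases L' with
    | nil => simpa using hall B (by simp)
    | cons C L'' =>
      have e : (B :: C :: L'').flatten = B ++ (C :: L'').flatten := rfl
      rw [e]
      have h1 := hall B (by simp)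
      have h2 := ih (by simp) (fun D hD => hall D (List.mem_cons_of_mem B hD))
      have h3 := sublist_altSeq_append h1 h2
      have harith2 : s + 3 + (s + ((C :: L'').length - 1) * (s + 3))
          = s + ((B :: C :: L'').length - 1) * (s + 3) := by
        simp only [List.length_cons, Nat.add_sub_cancel]
        ring
      rwa [harith2] at h3

lemma flatten_len (k : ℕ) : ∀ L : List (List ℤ), (∀ B ∈ L, B.length = k) →
    L.flatten.length = L.length * k := by
  intro L
  induction L with
  | nil => simp
  | cons B L' ih =>
    intro h
    have e : (B :: L').flatten = B ++ L'.flatten := rfl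
    rw [e, List.length_append, ih (fun D hD => h D (List.mem_cons_of_mem B hD)),
      h B (by simp), List.length_cons]
    ring

lemma flatten_isQ : ∀ L : List (List ℤ), (∀ B ∈ L, IsQ B) → IsQ L.flatten := by
  intro L
  induction L with
  | nil => intro _ a ha; simp at ha
  | cons B L' ih =>
    intro h a ha
    have e : (B :: L').flatten = B ++ L'.flatten := rfl
    rw [e] at ha
    rcases List.mem_append.mp ha with h' | h'
    · exact h B (by simp) a h'
    · exact ih (fun D hD => h D (List.mem_cons_of_mem B hD)) a h'

lemma flatten_inj (k : ℕ) : ∀ L L' : List (List ℤ), (∀ B ∈ L, B.length = k) →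
    (∀ B ∈ L', B.length = k) → L.length = L'.length → L.flatten = L'.flatten → L = L' := by
  intro L
  induction L with
  | nil => intro L' _ _ hl _; cases L' with
    | nil => rfl
    | cons => simp at hl
  | cons B M ih =>
    intro L' h1 h2 hl hf
    cases L' with
    | nil => simp at hl
    | cons B' M' =>
      have e1 : (B :: M).flatten = B ++ M.flatten := rfl
      have e2 : (B' :: M').flatten = B' ++ M'.flatten := rfl
      rw [e1, e2] at hf
      have hBB := List.append_inj hf (by rw [h1 B (by simp), h2 B' (by simp)])
      rw [hBB.1, ih M' (fun D hD => h1 D (List.mem_cons_of_mem B hD))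
        (fun D hD => h2 D (List.mem_cons_of_mem B' hD)) (by simp at hl; omega) hBB.2]

/-- The concatenation lower bound on `A n T`. -/
lemma A_lower (k c ℓ n : ℕ) (t T : ℤ) (hl : 0 < ℓ) (hn : ℓ * k + (c + 3) = n)
    (ht : 0 ≤ t) (hT : (ℓ : ℤ) * t + 4 * ((c:ℤ) + ℓ + 3) ≤ T) :
    4 ^ (c + 3) * (A k t) ^ ℓ ≤ A n T := by
  classical
  set tN := t.toNat with htNdef
  have htN : (tN : ℤ) = t := Int.toNat_of_nonneg ht
  -- properties of blocks
  have hWk : ∀ x ∈ W k t, x.length = k ∧ IsQ x ∧ x.Sublist (altSeq tN) := by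
    rintro x ⟨h1, h2, h3⟩
    refine ⟨h1, h2, sublist_of_isQ_synTime_le h2 ?_⟩
    omega
  -- the encoder
  set enc : (Fin ℓ → (W k t).Elem) × (Fin (c+3) → Fin 4) → List ℤ :=
    fun p => (List.ofFn (fun i => (p.1 i : List ℤ))).flatten
      ++ List.ofFn (fun j => ((p.2 j : ℕ) : ℤ) + 1) with hencdef
  have hmem : ∀ p, enc p ∈ W n T := by
    rintro ⟨f, g⟩
    set L := List.ofFn (fun i => ((f i : List ℤ))) with hLdef
    have hLlen : L.length = ℓ := by simp [hLdef]
    have hLmem : ∀ B ∈ L, B.length = k ∧ IsQ B ∧ B.Sublist (altSeq tN) := by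
      intro B hB
      rw [hLdef, List.mem_ofFn] at hB
      obtain ⟨i, rfl⟩ := hB
      exact hWk _ (f i).2
    set pad := List.ofFn (fun j : Fin (c+3) => ((g j : ℕ) : ℤ) + 1) with hpaddef
    have hpadlen : pad.length = c + 3 := by simp [hpaddef]
    have hpadQ : IsQ pad := by
      intro a ha
      rw [hpaddef, List.mem_ofFn] at ha
      obtain ⟨j, hj⟩ := ha
      rw [← hj]
      have := (g j).isLt
      constructor <;> push_cast <;> omega
    have hE : enc (f, g) = L.flatten ++ pad := rfl
    refine ⟨?_, ?_, ?_⟩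
    · rw [hE]
      simp only [List.length_append]
      rw [flatten_len k L (fun B hB => (hLmem B hB).1), hLlen, hpadlen]
      exact hn
    · intro a ha
      rw [hE] at ha
      rcases List.mem_append.mp ha with h' | h'
      · exact flatten_isQ L (fun B hB => (hLmem B hB).2.1) a h'
      · exact hpadQ a h'
    · -- synthesis time
      have hLne : L ≠ [] := by
        intro h
        rw [h] at hLlen
        simp at hLlen
        omega
      have hfl : L.flatten.Sublist (altSeq (tN + (L.length - 1) * (tN + 3))) :=
        flatten_syn tN L hLne (fun B hB => (hLmem B hB).2.2)
      have hpadsub : pad.Sublist (altSeq (4 * (c + 3))) := by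
        have := isQ_sublist_alt hpadQ
        rwa [hpadlen] at this
      have htot := sublist_altSeq_append hfl hpadsub
      have hst : synTime (enc (f, g)) ≤ tN + (L.length - 1) * (tN + 3) + 3 + 4 * (c + 3) := by
        rw [hE]
        exact synTime_le htot
      have hcast : ((tN + (L.length - 1) * (tN + 3) + 3 + 4 * (c + 3) : ℕ) : ℤ) ≤ T := by
        rw [hLlen]
        push_cast [Nat.cast_sub (by omega : 1 ≤ ℓ)]
        rw [htN]
        nlinarith [hT, ht, (by exact_mod_cast hl : (0:ℤ) < (ℓ:ℤ))]
      calc ((synTime (enc (f, g)) : ℤ)) ≤ _ := by exact_mod_cast hst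
        _ ≤ T := hcast
  -- injectivity
  haveI : Finite ↥(W n T) := (finW n T).to_subtype
  haveI : Finite ↥(W k t) := (finW k t).to_subtype
  set e : (Fin ℓ → (W k t).Elem) × (Fin (c+3) → Fin 4) → ↥(W n T) :=
    fun p => ⟨enc p, hmem p⟩ with hedef
  have hinj : Function.Injective e := by
    rintro ⟨f, g⟩ ⟨f', g'⟩ h
    have heq : enc (f, g) = enc (f', g') := congrArg Subtype.val h
    rw [hencdef] at heq
    simp only at heq
    have hlen1 : (List.ofFn (fun i => ((f i : List ℤ)))).flatten.length
        = (List.ofFn (fun i => ((f' i : List ℤ)))).flatten.length := by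
      rw [flatten_len k _ (by
        intro B hB
        rw [List.mem_ofFn] at hB
        obtain ⟨i, rfl⟩ := hB
        exact (hWk _ (f i).2).1),
        flatten_len k _ (by
        intro B hB
        rw [List.mem_ofFn] at hB
        obtain ⟨i, rfl⟩ := hB
        exact (hWk _ (f' i).2).1)]
      simp
    have hsplit := List.append_inj heq hlen1
    have hpads : g = g' := by
      have h2 := List.ofFn_inj.mp hsplit.2
      funext j
      have := congrFun h2 j
      have hval : (g j : ℕ) = (g' j : ℕ) := by omega
      exact Fin.ext hval
    have hblocks : f = f' := by
      have hLeq := flatten_inj k _ _ (by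
        intro B hB
        rw [List.mem_ofFn] at hB
        obtain ⟨i, rfl⟩ := hB
        exact (hWk _ (f i).2).1) (by
        intro B hB
        rw [List.mem_ofFn] at hB
        obtain ⟨i, rfl⟩ := hB
        exact (hWk _ (f' i).2).1) (by simp) hsplit.1
      have h2 := List.ofFn_inj.mp hLeq
      funext i
      exact Subtype.ext (congrFun h2 i)
    rw [hpads, hblocks]
  have hcard := Nat.card_le_card_of_injective e hinj
  rw [Nat.card_prod, Nat.card_fun, Nat.card_fun] at hcard
  rw [Nat.card_coe_set_eq, Nat.card_coe_set_eq] at hcard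
  simp only [Nat.card_eq_fintype_card, Fintype.card_fin] at hcard
  calc 4 ^ (c + 3) * (A k t) ^ ℓ = (W k t).ncard ^ ℓ * 4 ^ (c + 3) := by rw [A]; ring
    _ ≤ (W n T).ncard := hcard
    _ = A n T := rfl

lemma clog_add_three_le (n : ℕ) (hn : 5 ≤ n) : Nat.clog 4 n + 3 ≤ n := by
  set c := Nat.clog 4 n with hc
  by_cases h : c ≤ 2
  · omega
  · have h2 : 4 ^ (c - 1) < n := by
      have := Nat.pow_pred_clog_lt_self (by norm_num : (1:ℕ) < 4) (by omega : 1 < n)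
      simpa [hc] using this
    have h3 : c - 2 < 4 ^ (c - 2) := Nat.lt_pow_self (by norm_num)
    have h4 : 4 ^ (c - 1) = 4 * 4 ^ (c - 2) := by
      have e : c - 1 = (c - 2) + 1 := by omega
      rw [e, pow_succ']
    omega

/-- the block encoder. For sufficiently large `n`: if `ℓ` divides
`n - ⌈log₄ n⌉ - 3`, `k = (n - ⌈log₄ n⌉ - 3)/ℓ`, `ε = 4(⌈log₄ n⌉ + ℓ + 3)`,
`ε < T ≤ 4n` with `ℓ ∣ T - ε`, and `m = ⌊log₂ A(k,(T-ε)/ℓ)⌋ ≥ 1`, then there is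
an `(n,T,B)`-synthesis code `C ⊆ Σ^n` with `|C| ≥ 2^{ℓm}`. -/
theorem exists_block_encoder_code :
    ∃ N : ℕ, ∀ n ℓ : ℕ, N ≤ n → 0 < ℓ →
      ℓ ∣ (n - Nat.clog 4 n - 3) →
      ∀ T : ℤ, ((4 * (Nat.clog 4 n + ℓ + 3) : ℕ) : ℤ) < T → T ≤ 4 * n →
      (ℓ : ℤ) ∣ (T - ((4 * (Nat.clog 4 n + ℓ + 3) : ℕ) : ℤ)) →
      ∀ m : ℕ,
        m = Nat.log 2 (A ((n - Nat.clog 4 n - 3) / ℓ)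
              ((T - ((4 * (Nat.clog 4 n + ℓ + 3) : ℕ) : ℤ)) / (ℓ : ℤ))) →
        1 ≤ m →
      ∃ C : Set (List ℤ),
        (∀ x ∈ C, x.length = n ∧ IsQ x) ∧
        (∀ x ∈ C, (synTime x : ℤ) ≤ T) ∧
        (C.Pairwise fun x y => Disjoint (ball x) (ball y)) ∧
        2 ^ (ℓ * m) ≤ C.ncard := by
  classical
  refine ⟨5, ?_⟩
  intro n ℓ hN hl hdvd T hTe hT4 hdvd2 m hm hm1
  set c := Nat.clog 4 n with hc
  have hc3 : c + 3 ≤ n := clog_add_three_le n hN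
  set k := (n - c - 3) / ℓ with hk
  have hkl : ℓ * k = n - c - 3 := Nat.mul_div_cancel' hdvd
  have hn : ℓ * k + (c + 3) = n := by omega
  set ε : ℤ := ((4 * (c + ℓ + 3) : ℕ) : ℤ) with hε
  set t : ℤ := (T - ε) / (ℓ : ℤ) with htdef
  have hlt : (ℓ : ℤ) * t = T - ε := Int.mul_ediv_cancel' hdvd2
  have ht0 : 0 ≤ t := Int.ediv_nonneg (by omega) (by positivity)
  have hεval : ε = 4 * ((c : ℤ) + ℓ + 3) := by rw [hε]; push_cast; ring
  have hT : (ℓ : ℤ) * t + 4 * ((c : ℤ) + ℓ + 3) ≤ T := by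
    rw [← hεval]; omega
  have hAl := A_lower k c ℓ n t T hl hn ht0 hT
  have hA0 : A k t ≠ 0 := by
    intro h
    rw [h] at hm
    simp [Nat.log_zero_right] at hm
    omega
  have h2m : 2 ^ m ≤ A k t := by rw [hm]; exact Nat.pow_log_le_self 2 hA0
  have h4c : n ≤ 4 ^ c := Nat.le_pow_clog (by norm_num) n
  have hbig : n * 4 * 2 ^ (ℓ * m) ≤ A n T := by
    have e1 : (2 ^ m) ^ ℓ = 2 ^ (ℓ * m) := by rw [← pow_mul, Nat.mul_comm]
    have h1 : n * 4 ≤ 4 ^ (c + 3) := by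
      have e2 : 4 ^ (c + 3) = 4 ^ c * 64 := by ring
      omega
    calc n * 4 * 2 ^ (ℓ * m) ≤ 4 ^ (c + 3) * 2 ^ (ℓ * m) := Nat.mul_le_mul_right _ h1
      _ = 4 ^ (c + 3) * (2 ^ m) ^ ℓ := by rw [e1]
      _ ≤ 4 ^ (c + 3) * (A k t) ^ ℓ := Nat.mul_le_mul_left _ (Nat.pow_le_pow_left h2m ℓ)
      _ ≤ A n T := hAl
  -- pigeonhole over the VT syndromes
  haveI : NeZero n := ⟨by omega⟩
  set σ : List ℤ → ZMod n × ZMod 4 :=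
    fun x => (((vtSyn (auxSeq x) : ℕ) : ZMod n), ((x.sum : ℤ) : ZMod 4)) with hσ
  set F := (finW n T).toFinset with hF
  have hFcard : F.card = A n T := by
    rw [hF, A, Set.ncard_eq_toFinset_card _ (finW n T)]
  have hmaps : ∀ x ∈ F, σ x ∈ (Finset.univ : Finset (ZMod n × ZMod 4)) :=
    fun _ _ => Finset.mem_univ _
  have hcards : (Finset.univ : Finset (ZMod n × ZMod 4)).card * 2 ^ (ℓ * m) ≤ F.card := by
    rw [Finset.card_univ, Fintype.card_prod, ZMod.card, ZMod.card, hFcard]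
    exact hbig
  obtain ⟨p, _, hp⟩ := Finset.exists_le_card_fiber_of_mul_le_card_of_maps_to hmaps
    Finset.univ_nonempty hcards
  refine ⟨↑(F.filter (fun x => σ x = p)), ?_, ?_, ?_, ?_⟩
  · intro x hx
    rw [Finset.mem_coe, Finset.mem_filter] at hx
    have := (finW n T).mem_toFinset.mp (hF ▸ hx.1)
    exact ⟨this.1, this.2.1⟩
  · intro x hx
    rw [Finset.mem_coe, Finset.mem_filter] at hx
    have := (finW n T).mem_toFinset.mp (hF ▸ hx.1)
    exact this.2.2
  · intro x hx y hy hne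
    rw [Finset.mem_coe, Finset.mem_filter] at hx hy
    have hxW := (finW n T).mem_toFinset.mp (hF ▸ hx.1)
    have hyW := (finW n T).mem_toFinset.mp (hF ▸ hy.1)
    have hσeq : σ x = σ y := hx.2.trans hy.2.symm
    rw [hσ] at hσeq
    simp only [Prod.mk.injEq] at hσeq
    exact disj_balls hxW.1 hyW.1 hxW.2.1 hyW.2.1 hσeq.2 hσeq.1 hne
  · rw [Set.ncard_coe_finset]
    exact hp
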